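/- With the hypotheses of the Askey–Wilson setting below, assume moreover that z_i = z_1·q^{2−2i} for 1 ≤ i ≤ d. Then x_i = q^{−2i}·x_0 − a′·z_1·q^{d−3i+1}(q + q^{−1})(q^i − q^{−i}) for 0 ≤ i ≤ d. -/

import Mathlib

theorem fin_sum_two {n : ℕ} {M : Type*} [AddCommMonoid M] (f : Fin n → M) (a b : Fin n)
    (hab : a ≠ b) (h : ∀ c, c ≠ a → c ≠ b → f c = 0) : ∑ c, f c = f a + f b := by
  classical
  rw [← Finset.sum_pair hab]
  refine (Finset.sum_subset (Finset.subset_univ _) (fun x _ hx => ?_)).symm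
  simp only [Finset.mem_insert, Finset.mem_singleton, not_or] at hx
  exact h x hx.1 hx.2

set_option maxHeartbeats 2000000 in
/-- stmt15 of the paper, in the Askey–Wilson setting. -/
theorem stmt15 {F : Type*} [Field F] [IsAlgClosed F] {d : ℕ} (hd : 3 ≤ d)
    (q a a' b b' ξ : F) (hq : q ≠ 0)
    (hqru : ∀ n : ℕ, 1 ≤ n → q ^ n ≠ 1)
    (θ : ℤ → F)
    (hθ : ∀ i : ℤ, θ i = a * q ^ (2 * i - (d : ℤ)) + a' * q ^ ((d : ℤ) - 2 * i))
    (hθdist : ∀ i j : ℕ, i ≤ d → j ≤ d → i ≠ j → θ i ≠ θ j)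
    (β ρ ρs ω η ηs : F)
    (hβ : β = q ^ (2 : ℤ) + q ^ (-2 : ℤ))
    (hρ : ρ = -(a * a') * (q ^ (2 : ℤ) - q ^ (-2 : ℤ)) ^ 2)
    (hρs : ρs = -(b * b') * (q ^ (2 : ℤ) - q ^ (-2 : ℤ)) ^ 2)
    (hω : ω = (q - q⁻¹) ^ 2 *
      ((q ^ ((d : ℤ) + 1) + q ^ (-(d : ℤ) - 1)) * ξ - (a + a') * (b + b')))
    (hη : η = -((q - q⁻¹) * (q ^ (2 : ℤ) - q ^ (-2 : ℤ)) *
      ((a + a') * ξ - a * a' * (b + b') * (q ^ ((d : ℤ) + 1) + q ^ (-(d : ℤ) - 1)))))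
    (hηs : ηs = -((q - q⁻¹) * (q ^ (2 : ℤ) - q ^ (-2 : ℤ)) *
      ((b + b') * ξ - b * b' * (a + a') * (q ^ ((d : ℤ) + 1) + q ^ (-(d : ℤ) - 1)))))
    (x y z : ℕ → F)
    (hyz : ∀ i : ℕ, 1 ≤ i → i ≤ d → y i * z i ≠ 0)
    (hy0 : y 0 = 0) (hyd1 : y (d + 1) = 0)
    (A As : Matrix (Fin (d + 1)) (Fin (d + 1)) F)
    (hA : ∀ i j : Fin (d + 1), A i j =
      if (i : ℕ) = (j : ℕ) then θ (i : ℕ)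
      else if (i : ℕ) = (j : ℕ) + 1 then 1 else 0)
    (hAs : ∀ i j : Fin (d + 1), As i j =
      if (i : ℕ) = (j : ℕ) then x (i : ℕ)
      else if (i : ℕ) = (j : ℕ) + 1 then z (i : ℕ)
      else if (j : ℕ) = (i : ℕ) + 1 then y (j : ℕ) else 0)
    (hAW1 : A ^ 2 * As - β • (A * As * A) + As * A ^ 2 - ρ • As =
      ω • A + η • (1 : Matrix (Fin (d + 1)) (Fin (d + 1)) F))
    (hAW2 : As ^ 2 * A - β • (As * A * As) + A * As ^ 2 - ρs • A =
      ω • As + ηs • (1 : Matrix (Fin (d + 1)) (Fin (d + 1)) F))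
    (hz : ∀ i : ℕ, 1 ≤ i → i ≤ d → z i = z 1 * q ^ ((2 : ℤ) - 2 * (i : ℤ))) :
    ∀ i : ℕ, i ≤ d →
      x i = q ^ (-2 * (i : ℤ)) * x 0 -
        a' * z 1 * q ^ ((d : ℤ) - 3 * (i : ℤ) + 1) * (q + q⁻¹) *
          (q ^ (i : ℤ) - q ^ (-(i : ℤ))) := by
  have merge : ∀ (m : ℤ) (n p : ℕ), m + (n:ℤ) = (p:ℤ) → q ^ m * q ^ n = q ^ p := by
    intro m n p h
    rw [← zpow_natCast q n, ← zpow_add₀ hq, h, zpow_natCast]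
  have hz1 : z 1 ≠ 0 := by
    intro h
    exact hyz 1 le_rfl (by omega) (by rw [h, mul_zero])
  have hq6 : (1:F) - q ^ 6 ≠ 0 :=
    sub_ne_zero_of_ne (fun h => hqru 6 (by omega) h.symm)
  have hθdiv : ∀ j : ℕ, θ (j:ℤ) = (a * q ^ (4*j) + a' * q ^ (2*d)) * (q ^ (d + 2*j))⁻¹ := by
    intro j
    rw [hθ, eq_mul_inv_iff_mul_eq₀ (pow_ne_zero _ hq), add_mul, mul_assoc, mul_assoc,
      merge (2*(j:ℤ)-(d:ℤ)) (d+2*j) (4*j) (by push_cast; ring),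
      merge ((d:ℤ)-2*(j:ℤ)) (d+2*j) (2*d) (by push_cast; ring)]
  have hzdiv : ∀ j : ℕ, 1 ≤ j → j ≤ d → z j = z 1 * q ^ 2 * (q ^ (2*j))⁻¹ := by
    intro j h1 h2
    rw [hz j h1 h2, eq_mul_inv_iff_mul_eq₀ (pow_ne_zero _ hq), mul_assoc,
      merge ((2:ℤ)-2*(j:ℤ)) (2*j) 2 (by push_cast; ring)]
  have hβdiv : β = (q ^ 4 + 1) * (q ^ 2)⁻¹ := by
    rw [hβ, eq_mul_inv_iff_mul_eq₀ (pow_ne_zero _ hq), add_mul,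
      merge 2 2 4 (by norm_num), merge (-2) 2 0 (by norm_num), pow_zero]
  -- main recurrence from hAW2 at entry (k+2, k)
  have hrec : ∀ k : ℕ, k + 2 ≤ d →
      q ^ 6 * x (k+2) = (q ^ 4 + q ^ 2) * x (k+1) - x k := by
    intro k hk
    have p0 : k < d + 1 := by omega
    have p1 : k + 1 < d + 1 := by omega
    have p2 : k + 2 < d + 1 := by omega
    -- matrix entries
    have hA00 : A ⟨k,p0⟩ ⟨k,p0⟩ = θ (k:ℤ) := by rw [hA, if_pos rfl]
    have hA10 : A ⟨k+1,p1⟩ ⟨k,p0⟩ = 1 := by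
      rw [hA, if_neg (show ¬(k+1 = k) by omega), if_pos rfl]
    have hA11 : A ⟨k+1,p1⟩ ⟨k+1,p1⟩ = θ ((k+1:ℕ):ℤ) := by rw [hA, if_pos rfl]
    have hA21 : A ⟨k+2,p2⟩ ⟨k+1,p1⟩ = 1 := by
      rw [hA, if_neg (show ¬(k+2 = k+1) by omega), if_pos rfl]
    have hA22 : A ⟨k+2,p2⟩ ⟨k+2,p2⟩ = θ ((k+2:ℕ):ℤ) := by rw [hA, if_pos rfl]
    have hA20 : A ⟨k+2,p2⟩ ⟨k,p0⟩ = 0 := by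
      rw [hA, if_neg (show ¬(k+2 = k) by omega), if_neg (show ¬(k+2 = k+1) by omega)]
    have hAs00 : As ⟨k,p0⟩ ⟨k,p0⟩ = x k := by rw [hAs, if_pos rfl]
    have hAs10 : As ⟨k+1,p1⟩ ⟨k,p0⟩ = z (k+1) := by
      rw [hAs, if_neg (show ¬(k+1 = k) by omega), if_pos rfl]
    have hAs11 : As ⟨k+1,p1⟩ ⟨k+1,p1⟩ = x (k+1) := by rw [hAs, if_pos rfl]
    have hAs21 : As ⟨k+2,p2⟩ ⟨k+1,p1⟩ = z (k+2) := by
      rw [hAs, if_neg (show ¬(k+2 = k+1) by omega), if_pos rfl]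
    have hAs22 : As ⟨k+2,p2⟩ ⟨k+2,p2⟩ = x (k+2) := by rw [hAs, if_pos rfl]
    have hAs20 : As ⟨k+2,p2⟩ ⟨k,p0⟩ = 0 := by
      rw [hAs, if_neg (show ¬(k+2 = k) by omega), if_neg (show ¬(k+2 = k+1) by omega),
        if_neg (show ¬(k = k+3) by omega)]
    -- As*As entries
    have hAsAs20 : (As * As) ⟨k+2,p2⟩ ⟨k,p0⟩ = z (k+2) * z (k+1) := by
      rw [Matrix.mul_apply]
      rw [Fintype.sum_eq_single (⟨k+1,p1⟩ : Fin (d+1)) ?_, hAs21, hAs10]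
      intro c hc
      have hcv : (c:ℕ) ≠ k+1 := fun h => hc (Fin.ext h)
      by_cases h23 : (c:ℕ) = k+2 ∨ (c:ℕ) = k+3
      · rw [hAs c ⟨k,p0⟩, if_neg (show ¬((c:ℕ) = k) by omega),
          if_neg (show ¬((c:ℕ) = k+1) by omega),
          if_neg (show ¬(k = (c:ℕ)+1) by omega), mul_zero]
      · rw [hAs ⟨k+2,p2⟩ c, if_neg (show ¬(k+2 = (c:ℕ)) by omega),
          if_neg (show ¬(k+2 = (c:ℕ)+1) by omega),
          if_neg (show ¬((c:ℕ) = k+3) by omega), zero_mul]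
    have hAsAs21 : (As * As) ⟨k+2,p2⟩ ⟨k+1,p1⟩ = z (k+2) * x (k+1) + x (k+2) * z (k+2) := by
      rw [Matrix.mul_apply]
      rw [fin_sum_two _ (⟨k+1,p1⟩ : Fin (d+1)) (⟨k+2,p2⟩ : Fin (d+1))
        (Fin.ne_of_val_ne (show (k+1:ℕ) ≠ k+2 by omega)) ?_,
        hAs21, hAs11, hAs22]
      intro c hc1 hc2
      have hcv1 : (c:ℕ) ≠ k+1 := fun h => hc1 (Fin.ext h)
      have hcv2 : (c:ℕ) ≠ k+2 := fun h => hc2 (Fin.ext h)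
      by_cases h3 : (c:ℕ) = k+3
      · rw [hAs c ⟨k+1,p1⟩, if_neg (show ¬((c:ℕ) = k+1) by omega),
          if_neg (show ¬((c:ℕ) = k+2) by omega),
          if_neg (show ¬(k+1 = (c:ℕ)+1) by omega), mul_zero]
      · rw [hAs ⟨k+2,p2⟩ c, if_neg (show ¬(k+2 = (c:ℕ)) by omega),
          if_neg (show ¬(k+2 = (c:ℕ)+1) by omega),
          if_neg (show ¬((c:ℕ) = k+3) by omega), zero_mul]
    have hAsAs10 : (As * As) ⟨k+1,p1⟩ ⟨k,p0⟩ = z (k+1) * x k + x (k+1) * z (k+1) := by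
      rw [Matrix.mul_apply]
      rw [fin_sum_two _ (⟨k,p0⟩ : Fin (d+1)) (⟨k+1,p1⟩ : Fin (d+1))
        (Fin.ne_of_val_ne (show (k:ℕ) ≠ k+1 by omega)) ?_,
        hAs10, hAs00, hAs11]
      intro c hc1 hc2
      have hcv1 : (c:ℕ) ≠ k := fun h => hc1 (Fin.ext h)
      have hcv2 : (c:ℕ) ≠ k+1 := fun h => hc2 (Fin.ext h)
      by_cases h3 : (c:ℕ) = k+2
      · rw [hAs c ⟨k,p0⟩, if_neg (show ¬((c:ℕ) = k) by omega),
          if_neg (show ¬((c:ℕ) = k+1) by omega),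
          if_neg (show ¬(k = (c:ℕ)+1) by omega), mul_zero]
      · rw [hAs ⟨k+1,p1⟩ c, if_neg (show ¬(k+1 = (c:ℕ)) by omega),
          if_neg (show ¬(k+1 = (c:ℕ)+1) by omega),
          if_neg (show ¬((c:ℕ) = k+2) by omega), zero_mul]
    -- A*As entries
    have hB10 : (A * As) ⟨k+1,p1⟩ ⟨k,p0⟩ = x k + θ ((k+1:ℕ):ℤ) * z (k+1) := by
      rw [Matrix.mul_apply]
      rw [fin_sum_two _ (⟨k,p0⟩ : Fin (d+1)) (⟨k+1,p1⟩ : Fin (d+1))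
        (Fin.ne_of_val_ne (show (k:ℕ) ≠ k+1 by omega)) ?_,
        hA10, hAs00, hA11, hAs10]
      · ring
      intro c hc1 hc2
      have hcv1 : (c:ℕ) ≠ k := fun h => hc1 (Fin.ext h)
      have hcv2 : (c:ℕ) ≠ k+1 := fun h => hc2 (Fin.ext h)
      rw [hA ⟨k+1,p1⟩ c, if_neg (show ¬(k+1 = (c:ℕ)) by omega),
        if_neg (show ¬(k+1 = (c:ℕ)+1) by omega), zero_mul]
    have hB20 : (A * As) ⟨k+2,p2⟩ ⟨k,p0⟩ = z (k+1) := by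
      rw [Matrix.mul_apply]
      rw [fin_sum_two _ (⟨k+1,p1⟩ : Fin (d+1)) (⟨k+2,p2⟩ : Fin (d+1))
        (Fin.ne_of_val_ne (show (k+1:ℕ) ≠ k+2 by omega)) ?_,
        hA21, hAs10, hA22, hAs20]
      · ring
      intro c hc1 hc2
      have hcv1 : (c:ℕ) ≠ k+1 := fun h => hc1 (Fin.ext h)
      have hcv2 : (c:ℕ) ≠ k+2 := fun h => hc2 (Fin.ext h)
      rw [hA ⟨k+2,p2⟩ c, if_neg (show ¬(k+2 = (c:ℕ)) by omega),
        if_neg (show ¬(k+2 = (c:ℕ)+1) by omega), zero_mul]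
    -- triple products
    have hT1 : (As ^ 2 * A) ⟨k+2,p2⟩ ⟨k,p0⟩ =
        z (k+2) * z (k+1) * θ (k:ℤ) + (z (k+2) * x (k+1) + x (k+2) * z (k+2)) := by
      rw [pow_two, Matrix.mul_apply]
      rw [fin_sum_two _ (⟨k,p0⟩ : Fin (d+1)) (⟨k+1,p1⟩ : Fin (d+1))
        (Fin.ne_of_val_ne (show (k:ℕ) ≠ k+1 by omega)) ?_,
        hAsAs20, hA00, hAsAs21, hA10]
      · ring
      intro c hc1 hc2
      have hcv1 : (c:ℕ) ≠ k := fun h => hc1 (Fin.ext h)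
      have hcv2 : (c:ℕ) ≠ k+1 := fun h => hc2 (Fin.ext h)
      rw [hA c ⟨k,p0⟩, if_neg (show ¬((c:ℕ) = k) by omega),
        if_neg (show ¬((c:ℕ) = k+1) by omega), mul_zero]
    have hT2 : (As * A * As) ⟨k+2,p2⟩ ⟨k,p0⟩ =
        z (k+2) * (x k + θ ((k+1:ℕ):ℤ) * z (k+1)) + x (k+2) * z (k+1) := by
      rw [mul_assoc, Matrix.mul_apply]
      rw [fin_sum_two _ (⟨k+1,p1⟩ : Fin (d+1)) (⟨k+2,p2⟩ : Fin (d+1))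
        (Fin.ne_of_val_ne (show (k+1:ℕ) ≠ k+2 by omega)) ?_,
        hAs21, hB10, hAs22, hB20]
      intro c hc1 hc2
      have hcv1 : (c:ℕ) ≠ k+1 := fun h => hc1 (Fin.ext h)
      have hcv2 : (c:ℕ) ≠ k+2 := fun h => hc2 (Fin.ext h)
      by_cases h3 : (c:ℕ) = k+3
      · -- (A*As) c ⟨k⟩ = 0
        have hz3 : (A * As) c ⟨k,p0⟩ = 0 := by
          rw [Matrix.mul_apply]
          apply Finset.sum_eq_zero
          intro m _
          by_cases hm : (m:ℕ) = k+2 ∨ (m:ℕ) = k+3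
          · rw [hAs m ⟨k,p0⟩, if_neg (show ¬((m:ℕ) = k) by omega),
              if_neg (show ¬((m:ℕ) = k+1) by omega),
              if_neg (show ¬(k = (m:ℕ)+1) by omega), mul_zero]
          · rw [hA c m, if_neg (show ¬((c:ℕ) = (m:ℕ)) by omega),
              if_neg (show ¬((c:ℕ) = (m:ℕ)+1) by omega), zero_mul]
        rw [hz3, mul_zero]
      · rw [hAs ⟨k+2,p2⟩ c, if_neg (show ¬(k+2 = (c:ℕ)) by omega),
          if_neg (show ¬(k+2 = (c:ℕ)+1) by omega),
          if_neg (show ¬((c:ℕ) = k+3) by omega), zero_mul]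
    have hT3 : (A * As ^ 2) ⟨k+2,p2⟩ ⟨k,p0⟩ =
        (z (k+1) * x k + x (k+1) * z (k+1)) + θ ((k+2:ℕ):ℤ) * (z (k+2) * z (k+1)) := by
      rw [pow_two, Matrix.mul_apply]
      rw [fin_sum_two _ (⟨k+1,p1⟩ : Fin (d+1)) (⟨k+2,p2⟩ : Fin (d+1))
        (Fin.ne_of_val_ne (show (k+1:ℕ) ≠ k+2 by omega)) ?_,
        hA21, hAsAs10, hA22, hAsAs20]
      · ring
      intro c hc1 hc2
      have hcv1 : (c:ℕ) ≠ k+1 := fun h => hc1 (Fin.ext h)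
      have hcv2 : (c:ℕ) ≠ k+2 := fun h => hc2 (Fin.ext h)
      rw [hA ⟨k+2,p2⟩ c, if_neg (show ¬(k+2 = (c:ℕ)) by omega),
        if_neg (show ¬(k+2 = (c:ℕ)+1) by omega), zero_mul]
    have E := congrFun (congrFun hAW2 ⟨k+2,p2⟩) ⟨k,p0⟩
    simp only [Matrix.sub_apply, Matrix.add_apply, Matrix.smul_apply, smul_eq_mul] at E
    rw [hT1, hT2, hT3, hAs20, hA20,
      Matrix.one_apply_ne (Fin.ne_of_val_ne (show (k+2:ℕ) ≠ k by omega))] at E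
    rw [hθdiv k, hθdiv (k+1), hθdiv (k+2), hzdiv (k+1) (by omega) (by omega),
      hzdiv (k+2) (by omega) (by omega), hβdiv] at E
    field_simp at E
    have g1 : q ^ (2*(k+2)) * q ^ (2*(k+1)) * q ^ (d+2*k) * q ^ (2*(k+2)) ≠ 0 := by
      simp [ne_eq, mul_eq_zero, pow_eq_zero_iff', hq]
    have g2 : q ^ 2 * (q ^ (2*(k+2)) * (q ^ (d+2*(k+1)) * q ^ (2*(k+1))) * q ^ (2*(k+1))) ≠ 0 := by
      simp [ne_eq, mul_eq_zero, pow_eq_zero_iff', hq]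
    have g3 : q ^ (2*(k+1)) * (q ^ (d+2*(k+2)) * (q ^ (2*(k+2)) * q ^ (2*(k+1)))) ≠ 0 := by
      simp [ne_eq, mul_eq_zero, pow_eq_zero_iff', hq]
    have key : z 1 * q ^ (3*d+22*k+30) * (q^6 * x (k+2) - (q^4+q^2) * x (k+1) + x k) = 0 := by
      linear_combination -(q ^ (14*k+22)) * E
    have key2 := (mul_eq_zero.mp key).resolve_left
      (mul_ne_zero hz1 (pow_ne_zero _ hq))
    linear_combination key2
  -- equation from hAW1 at entry (2,0)
  have w0 : 0 < d + 1 := by omega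
  have w1 : 1 < d + 1 := by omega
  have w2 : 2 < d + 1 := by omega
  have w3 : 3 < d + 1 := by omega
  have hA00 : A ⟨0,w0⟩ ⟨0,w0⟩ = θ ((0:ℕ):ℤ) := by rw [hA, if_pos rfl]
  have hA10 : A ⟨1,w1⟩ ⟨0,w0⟩ = 1 := by
    rw [hA, if_neg (show ¬((1:ℕ) = 0) by omega), if_pos rfl]
  have hA11 : A ⟨1,w1⟩ ⟨1,w1⟩ = θ ((1:ℕ):ℤ) := by rw [hA, if_pos rfl]
  have hA21 : A ⟨2,w2⟩ ⟨1,w1⟩ = 1 := by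
    rw [hA, if_neg (show ¬((2:ℕ) = 1) by omega), if_pos rfl]
  have hA22 : A ⟨2,w2⟩ ⟨2,w2⟩ = θ ((2:ℕ):ℤ) := by rw [hA, if_pos rfl]
  have hA20 : A ⟨2,w2⟩ ⟨0,w0⟩ = 0 := by
    rw [hA, if_neg (show ¬((2:ℕ) = 0) by omega), if_neg (show ¬((2:ℕ) = 0+1) by omega)]
  have hAs00 : As ⟨0,w0⟩ ⟨0,w0⟩ = x 0 := by rw [hAs, if_pos rfl]
  have hAs10 : As ⟨1,w1⟩ ⟨0,w0⟩ = z 1 := by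
    rw [hAs, if_neg (show ¬((1:ℕ) = 0) by omega), if_pos rfl]
  have hAs11 : As ⟨1,w1⟩ ⟨1,w1⟩ = x 1 := by rw [hAs, if_pos rfl]
  have hAs21 : As ⟨2,w2⟩ ⟨1,w1⟩ = z 2 := by
    rw [hAs, if_neg (show ¬((2:ℕ) = 1) by omega), if_pos rfl]
  have hAs22 : As ⟨2,w2⟩ ⟨2,w2⟩ = x 2 := by rw [hAs, if_pos rfl]
  have hAs20 : As ⟨2,w2⟩ ⟨0,w0⟩ = 0 := by
    rw [hAs, if_neg (show ¬((2:ℕ) = 0) by omega), if_neg (show ¬((2:ℕ) = 0+1) by omega),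
      if_neg (show ¬((0:ℕ) = 2+1) by omega)]
  have hAA10 : (A * A) ⟨1,w1⟩ ⟨0,w0⟩ = θ ((0:ℕ):ℤ) + θ ((1:ℕ):ℤ) := by
    rw [Matrix.mul_apply]
    rw [fin_sum_two _ (⟨0,w0⟩ : Fin (d+1)) (⟨1,w1⟩ : Fin (d+1))
      (Fin.ne_of_val_ne (show (0:ℕ) ≠ 1 by omega)) ?_, hA10, hA00, hA11]
    · ring
    intro c hc1 hc2
    have hcv1 : (c:ℕ) ≠ 0 := fun h => hc1 (Fin.ext h)
    have hcv2 : (c:ℕ) ≠ 1 := fun h => hc2 (Fin.ext h)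
    rw [hA ⟨1,w1⟩ c, if_neg (show ¬((1:ℕ) = (c:ℕ)) by omega),
      if_neg (show ¬((1:ℕ) = (c:ℕ)+1) by omega), zero_mul]
  have hAA20 : (A * A) ⟨2,w2⟩ ⟨0,w0⟩ = 1 := by
    rw [Matrix.mul_apply]
    rw [fin_sum_two _ (⟨1,w1⟩ : Fin (d+1)) (⟨2,w2⟩ : Fin (d+1))
      (Fin.ne_of_val_ne (show (1:ℕ) ≠ 2 by omega)) ?_, hA21, hA10, hA22, hA20]
    · ring
    intro c hc1 hc2
    have hcv1 : (c:ℕ) ≠ 1 := fun h => hc1 (Fin.ext h)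
    have hcv2 : (c:ℕ) ≠ 2 := fun h => hc2 (Fin.ext h)
    rw [hA ⟨2,w2⟩ c, if_neg (show ¬((2:ℕ) = (c:ℕ)) by omega),
      if_neg (show ¬((2:ℕ) = (c:ℕ)+1) by omega), zero_mul]
  have hAA21 : (A * A) ⟨2,w2⟩ ⟨1,w1⟩ = θ ((1:ℕ):ℤ) + θ ((2:ℕ):ℤ) := by
    rw [Matrix.mul_apply]
    rw [fin_sum_two _ (⟨1,w1⟩ : Fin (d+1)) (⟨2,w2⟩ : Fin (d+1))
      (Fin.ne_of_val_ne (show (1:ℕ) ≠ 2 by omega)) ?_, hA21, hA11, hA22]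
    · ring
    intro c hc1 hc2
    have hcv1 : (c:ℕ) ≠ 1 := fun h => hc1 (Fin.ext h)
    have hcv2 : (c:ℕ) ≠ 2 := fun h => hc2 (Fin.ext h)
    rw [hA ⟨2,w2⟩ c, if_neg (show ¬((2:ℕ) = (c:ℕ)) by omega),
      if_neg (show ¬((2:ℕ) = (c:ℕ)+1) by omega), zero_mul]
  have hAA30 : ∀ c : Fin (d+1), (c:ℕ) = 3 → (A * A) c ⟨0,w0⟩ = 0 := by
    intro c hc
    rw [Matrix.mul_apply]
    apply Finset.sum_eq_zero
    intro m _
    by_cases hm : (m:ℕ) = 2 ∨ (m:ℕ) = 3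
    · rw [hA m ⟨0,w0⟩, if_neg (show ¬((m:ℕ) = 0) by omega),
        if_neg (show ¬((m:ℕ) = 0+1) by omega), mul_zero]
    · rw [hA c m, if_neg (show ¬((c:ℕ) = (m:ℕ)) by omega),
        if_neg (show ¬((c:ℕ) = (m:ℕ)+1) by omega), zero_mul]
  have hU1 : (A ^ 2 * As) ⟨2,w2⟩ ⟨0,w0⟩ = x 0 + (θ ((1:ℕ):ℤ) + θ ((2:ℕ):ℤ)) * z 1 := by
    rw [pow_two, Matrix.mul_apply]
    rw [fin_sum_two _ (⟨0,w0⟩ : Fin (d+1)) (⟨1,w1⟩ : Fin (d+1))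
      (Fin.ne_of_val_ne (show (0:ℕ) ≠ 1 by omega)) ?_, hAA20, hAs00, hAA21, hAs10]
    · ring
    intro c hc1 hc2
    have hcv1 : (c:ℕ) ≠ 0 := fun h => hc1 (Fin.ext h)
    have hcv2 : (c:ℕ) ≠ 1 := fun h => hc2 (Fin.ext h)
    rw [hAs c ⟨0,w0⟩, if_neg (show ¬((c:ℕ) = 0) by omega),
      if_neg (show ¬((c:ℕ) = 0+1) by omega),
      if_neg (show ¬((0:ℕ) = (c:ℕ)+1) by omega), mul_zero]
  have hB20' : (A * As) ⟨2,w2⟩ ⟨0,w0⟩ = z 1 := by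
    rw [Matrix.mul_apply]
    rw [fin_sum_two _ (⟨1,w1⟩ : Fin (d+1)) (⟨2,w2⟩ : Fin (d+1))
      (Fin.ne_of_val_ne (show (1:ℕ) ≠ 2 by omega)) ?_, hA21, hAs10, hA22, hAs20]
    · ring
    intro c hc1 hc2
    have hcv1 : (c:ℕ) ≠ 1 := fun h => hc1 (Fin.ext h)
    have hcv2 : (c:ℕ) ≠ 2 := fun h => hc2 (Fin.ext h)
    rw [hA ⟨2,w2⟩ c, if_neg (show ¬((2:ℕ) = (c:ℕ)) by omega),
      if_neg (show ¬((2:ℕ) = (c:ℕ)+1) by omega), zero_mul]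
  have hB21' : (A * As) ⟨2,w2⟩ ⟨1,w1⟩ = x 1 + θ ((2:ℕ):ℤ) * z 2 := by
    rw [Matrix.mul_apply]
    rw [fin_sum_two _ (⟨1,w1⟩ : Fin (d+1)) (⟨2,w2⟩ : Fin (d+1))
      (Fin.ne_of_val_ne (show (1:ℕ) ≠ 2 by omega)) ?_, hA21, hAs11, hA22, hAs21]
    · ring
    intro c hc1 hc2
    have hcv1 : (c:ℕ) ≠ 1 := fun h => hc1 (Fin.ext h)
    have hcv2 : (c:ℕ) ≠ 2 := fun h => hc2 (Fin.ext h)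
    rw [hA ⟨2,w2⟩ c, if_neg (show ¬((2:ℕ) = (c:ℕ)) by omega),
      if_neg (show ¬((2:ℕ) = (c:ℕ)+1) by omega), zero_mul]
  have hU2 : (A * As * A) ⟨2,w2⟩ ⟨0,w0⟩ =
      z 1 * θ ((0:ℕ):ℤ) + (x 1 + θ ((2:ℕ):ℤ) * z 2) := by
    rw [Matrix.mul_apply]
    rw [fin_sum_two _ (⟨0,w0⟩ : Fin (d+1)) (⟨1,w1⟩ : Fin (d+1))
      (Fin.ne_of_val_ne (show (0:ℕ) ≠ 1 by omega)) ?_, hB20', hA00, hB21', hA10]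
    · ring
    intro c hc1 hc2
    have hcv1 : (c:ℕ) ≠ 0 := fun h => hc1 (Fin.ext h)
    have hcv2 : (c:ℕ) ≠ 1 := fun h => hc2 (Fin.ext h)
    rw [hA c ⟨0,w0⟩, if_neg (show ¬((c:ℕ) = 0) by omega),
      if_neg (show ¬((c:ℕ) = 0+1) by omega), mul_zero]
  have hU3 : (As * A ^ 2) ⟨2,w2⟩ ⟨0,w0⟩ =
      z 2 * (θ ((0:ℕ):ℤ) + θ ((1:ℕ):ℤ)) + x 2 := by
    rw [pow_two, Matrix.mul_apply]
    rw [fin_sum_two _ (⟨1,w1⟩ : Fin (d+1)) (⟨2,w2⟩ : Fin (d+1))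
      (Fin.ne_of_val_ne (show (1:ℕ) ≠ 2 by omega)) ?_, hAs21, hAA10, hAs22, hAA20]
    · ring
    intro c hc1 hc2
    have hcv1 : (c:ℕ) ≠ 1 := fun h => hc1 (Fin.ext h)
    have hcv2 : (c:ℕ) ≠ 2 := fun h => hc2 (Fin.ext h)
    by_cases h3 : (c:ℕ) = 3
    · rw [hAA30 c h3, mul_zero]
    · rw [hAs ⟨2,w2⟩ c, if_neg (show ¬((2:ℕ) = (c:ℕ)) by omega),
        if_neg (show ¬((2:ℕ) = (c:ℕ)+1) by omega),
        if_neg (show ¬((c:ℕ) = 2+1) by omega), zero_mul]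
  have E := congrFun (congrFun hAW1 ⟨2,w2⟩) ⟨0,w0⟩
  simp only [Matrix.sub_apply, Matrix.add_apply, Matrix.smul_apply, smul_eq_mul] at E
  rw [hU1, hU2, hU3, hAs20, hA20,
    Matrix.one_apply_ne (Fin.ne_of_val_ne (show (2:ℕ) ≠ 0 by omega))] at E
  rw [hθdiv 0, hθdiv 1, hθdiv 2, hzdiv 2 (by omega) (by omega), hβdiv] at E
  field_simp at E
  have hR : (q:F) ^ 2 * (q ^ d * (q ^ (d + 2 * 2) * q ^ (2 * 2))) ≠ 0 := by
    simp [ne_eq, mul_eq_zero, pow_eq_zero_iff', hq]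
  -- solve for x 1
  have h2 := hrec 0 (by omega)
  have key : ((1:F) - q ^ 6) * q ^ (6*d+18) *
      (q ^ 6 * x 1 - (q ^ 4 * x 0 - a' * z 1 * q ^ d * (q ^ 2 + 1) * (q ^ 4 - q ^ 2))) = 0 := by
    linear_combination (q:F) ^ (3*d+16) * E - q ^ (6*d+22) * h2
  have key2 := (mul_eq_zero.mp key).resolve_left (mul_ne_zero hq6 (pow_ne_zero _ hq))
  have hx1 : q ^ 6 * x 1 = q ^ 4 * x 0 - a' * z 1 * q ^ d * (q ^ 2 + 1) * (q ^ 4 - q ^ 2) := by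
    linear_combination key2
  -- closed form, multiplied through by q^(4i+2)
  have hG : ∀ i : ℕ, i ≤ d → q ^ (4*i+2) * x i =
      q ^ (2*i+2) * x 0 - a' * z 1 * q ^ d * (q ^ 2 + 1) * (q ^ (2*i+2) - q ^ 2) := by
    intro i
    induction i using Nat.strong_induction_on with
    | _ i ih =>
      intro hi
      match i, ih, hi with
      | 0, ih, hi => ring
      | 1, ih, hi => linear_combination hx1
      | (j+2), ih, hi =>
        have e0 := ih j (by omega) (by omega)
        have e1 := ih (j+1) (by omega) (by omega)
        have r := hrec j (by omega)
        linear_combination (q:F) ^ (4*j+4) * r + (q ^ 2 + 1) * e1 - q ^ 2 * e0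
  -- final conversion to the zpow statement
  intro i hi
  have hGi := hG i hi
  have hp : (q:F) ^ (4*i+2) ≠ 0 := pow_ne_zero _ hq
  apply mul_left_cancel₀ hp
  rw [hGi]
  have c1 : q ^ (-2*(i:ℤ)) = (q ^ (2*i))⁻¹ := by
    have h := merge (-2*(i:ℤ)) (2*i) 0 (by push_cast; ring)
    rw [pow_zero] at h
    exact eq_inv_of_mul_eq_one_left h
  have c2 : q ^ ((d:ℤ) - 3*(i:ℤ) + 1) = q ^ (d+1) * (q ^ (3*i))⁻¹ := by
    rw [eq_mul_inv_iff_mul_eq₀ (pow_ne_zero _ hq)]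
    exact merge _ _ _ (by push_cast; ring)
  have c3 : q ^ ((i:ℤ)) = q ^ i := zpow_natCast q i
  have c4 : q ^ (-(i:ℤ)) = (q ^ i)⁻¹ := by rw [zpow_neg, c3]
  rw [c1, c2, c3, c4]
  have u1 : q ^ (4*i+2) * (q ^ (2*i))⁻¹ = q ^ (2*i+2) := by
    rw [mul_inv_eq_iff_eq_mul₀ (pow_ne_zero _ hq), ← pow_add]
    congr 1
    ring
  have u2 : q ^ (4*i+2) * (q ^ (3*i))⁻¹ * q ^ i = q ^ (2*i+2) := by
    rw [mul_assoc, mul_comm ((q ^ (3*i))⁻¹), ← mul_assoc,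
      mul_inv_eq_iff_eq_mul₀ (pow_ne_zero _ hq), ← pow_add, ← pow_add]
    congr 1
    ring
  have u3 : q ^ (4*i+2) * (q ^ (3*i))⁻¹ * (q ^ i)⁻¹ = q ^ 2 := by
    rw [mul_assoc, ← mul_inv, mul_inv_eq_iff_eq_mul₀
      (mul_ne_zero (pow_ne_zero _ hq) (pow_ne_zero _ hq)), ← pow_add, ← pow_add]
    congr 1
    ring
  have u4 : q * q⁻¹ = 1 := mul_inv_cancel₀ hq
  linear_combination (-(x 0))*u1 + (a'*z 1*q^(d+1)*(q+q⁻¹))*u2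
    - (a'*z 1*q^(d+1)*(q+q⁻¹))*u3 + (a'*z 1*q^d*(q^(2*i+2)-q^2))*u4
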